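/- arXiv:2301.04060 — 5 statements merged into one kernel-verified Lean document; each statement's English description precedes it below -/
import Mathlib

section
/- Let P = {x ∈ ℝ^n : A x ≥ b} be a polyhedron. Every vertex of P is the basic point x^I of some feasible basis I, i.e., there exists I ⊆ [m] with #I = n, A_I nonsingular, x^I = A_I^{-1} b_I a point of P, and the vertex equals x^I. -/
open Matrix

/-- The polyhedron `{x : A x ≥ b}`. -/
def PolyhedronOf {m n : ℕ} (A : Matrix (Fin m) (Fin n) ℝ) (b : Fin m → ℝ) :
    Set (Fin n → ℝ) :=
  {x | ∀ i, b i ≤ A.mulVec x i}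

/-- `v` is a vertex of `P`: the singleton `{v}` is the set of minimizers of some
linear functional over `P` (a zero-dimensional face). -/
def IsVertex {n : ℕ} (P : Set (Fin n → ℝ)) (v : Fin n → ℝ) : Prop :=
  ∃ c : Fin n → ℝ, {x ∈ P | ∀ y ∈ P, c ⬝ᵥ x ≤ c ⬝ᵥ y} = {v}

/-- Every vertex of `P = {x : A x ≥ b}` is the basic point of some feasible basis:
there are `n` row indices `I` (given by the embedding `r`) with `A_I` nonsingular
and `A_I v = b_I`; since moreover `v ∈ P`, the basis is feasible and the vertex
equals its basic point `x^I = A_I⁻¹ b_I`. -/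
theorem stmt4 {m n : ℕ} (A : Matrix (Fin m) (Fin n) ℝ) (b : Fin m → ℝ)
    (v : Fin n → ℝ) (hv : IsVertex (PolyhedronOf A b) v) :
    ∃ r : Fin n ↪ Fin m,
      (A.submatrix r id).det ≠ 0 ∧
      (A.submatrix r id).mulVec v = (fun i => b (r i)) ∧
      v ∈ PolyhedronOf A b := by
  obtain ⟨c, hc⟩ := hv
  have hvmem : v ∈ {x ∈ PolyhedronOf A b | ∀ y ∈ PolyhedronOf A b, c ⬝ᵥ x ≤ c ⬝ᵥ y} := by
    rw [hc]; rfl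
  obtain ⟨hvP, hvmin⟩ := hvmem
  -- Key step: any direction orthogonal to all tight rows is zero.
  have key : ∀ d : Fin n → ℝ, (∀ i, A.mulVec v i = b i → A i ⬝ᵥ d = 0) → d = 0 := by
    intro d hd
    set ratio : Fin m → ℝ := fun i => (A.mulVec v i - b i) / (|A i ⬝ᵥ d| + 1) with hratio
    set S' : Finset (Fin m) := Finset.univ.filter (fun i => A.mulVec v i ≠ b i) with hS'
    set F : Finset ℝ := insert 1 (S'.image ratio) with hF
    have hFne : F.Nonempty := ⟨1, Finset.mem_insert_self _ _⟩
    set ε := F.min' hFne with hε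
    have hεpos : 0 < ε := by
      rw [hε]
      apply (Finset.lt_min'_iff _ _).2
      intro x hx
      rcases Finset.mem_insert.1 hx with h | h
      · rw [h]; exact one_pos
      · obtain ⟨i, hi, rfl⟩ := Finset.mem_image.1 h
        have hi' := (Finset.mem_filter.1 hi).2
        have h1 : b i ≤ A.mulVec v i := hvP i
        have h2 : 0 < A.mulVec v i - b i := sub_pos.2 (lt_of_le_of_ne h1 (Ne.symm hi'))
        have h3 : (0:ℝ) < |A i ⬝ᵥ d| + 1 := by positivity
        exact div_pos h2 h3
    have hεle : ∀ i ∈ S', ε * |A i ⬝ᵥ d| ≤ A.mulVec v i - b i := by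
      intro i hi
      have h1 : ε ≤ ratio i :=
        Finset.min'_le _ _ (Finset.mem_insert_of_mem (Finset.mem_image_of_mem _ hi))
      have hgt : (0:ℝ) < |A i ⬝ᵥ d| + 1 := by positivity
      have h2 : ratio i * |A i ⬝ᵥ d| ≤ A.mulVec v i - b i := by
        rw [hratio]
        rw [div_mul_eq_mul_div, div_le_iff₀ hgt]
        have hf : (0:ℝ) ≤ A.mulVec v i - b i := sub_nonneg.2 (hvP i)
        nlinarith [abs_nonneg (A i ⬝ᵥ d)]
      calc ε * |A i ⬝ᵥ d| ≤ ratio i * |A i ⬝ᵥ d| :=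
            mul_le_mul_of_nonneg_right h1 (abs_nonneg _)
        _ ≤ _ := h2
    have hP : ∀ t : ℝ, |t| ≤ ε → v + t • d ∈ PolyhedronOf A b := by
      intro t ht i
      show b i ≤ A.mulVec (v + t • d) i
      rw [mulVec_add, mulVec_smul]
      simp only [Pi.add_apply, Pi.smul_apply, smul_eq_mul]
      by_cases h : A.mulVec v i = b i
      · have h0 : A.mulVec d i = 0 := hd i h
        rw [h0, h]; ring_nf; exact le_refl _
      · have hi : i ∈ S' := Finset.mem_filter.2 ⟨Finset.mem_univ _, h⟩
        have h1 := hεle i hi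
        have habs : |t * A.mulVec d i| ≤ ε * |A i ⬝ᵥ d| := by
          rw [abs_mul]
          exact mul_le_mul ht le_rfl (abs_nonneg _) (le_of_lt hεpos)
        have h2 : -(t * A.mulVec d i) ≤ |t * A.mulVec d i| := neg_le_abs _
        linarith
    have hεmem₁ : v + ε • d ∈ PolyhedronOf A b := hP ε (by rw [abs_of_pos hεpos])
    have hεmem₂ : v + (-ε) • d ∈ PolyhedronOf A b := hP (-ε) (by rw [abs_neg, abs_of_pos hεpos])
    have hdot : ∀ t : ℝ, c ⬝ᵥ (v + t • d) = c ⬝ᵥ v + t * (c ⬝ᵥ d) := by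
      intro t
      rw [dotProduct_add, dotProduct_smul, smul_eq_mul]
    have h1 := hvmin _ hεmem₁
    have h2 := hvmin _ hεmem₂
    rw [hdot] at h1 h2
    have hcd : c ⬝ᵥ d = 0 := by nlinarith
    have hmem : v + ε • d ∈ {x ∈ PolyhedronOf A b | ∀ y ∈ PolyhedronOf A b, c ⬝ᵥ x ≤ c ⬝ᵥ y} := by
      refine ⟨hεmem₁, fun y hy => ?_⟩
      rw [hdot, hcd, mul_zero, add_zero]
      exact hvmin y hy
    rw [hc, Set.mem_singleton_iff] at hmem
    have : ε • d = 0 := by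
      have := congrArg (fun x => x - v) hmem
      simpa using this
    rcases smul_eq_zero.1 this with h | h
    · exact absurd h (ne_of_gt hεpos)
    · exact h
  -- The tight rows span ℝⁿ.
  set T : Set (Fin m) := {i | A.mulVec v i = b i} with hT
  set s : Set (Fin n → ℝ) := (fun i => A i) '' T with hs
  have hspan : Submodule.span ℝ s = ⊤ := by
    by_contra hn
    obtain ⟨φ, hφne, hφ⟩ :=
      Submodule.exists_dual_map_eq_bot_of_lt_top (p := Submodule.span ℝ s)
        (lt_top_iff_ne_top.2 hn) inferInstance
    set d : Fin n → ℝ := fun j => φ (Pi.single j 1) with hdd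
    have hφx : ∀ x : Fin n → ℝ, φ x = d ⬝ᵥ x := by
      intro x
      have hx : x = ∑ j, x j • (Pi.single j (1:ℝ) : Fin n → ℝ) := by
        funext k
        simp [Pi.single_apply, Finset.sum_apply, mul_ite]
      conv_lhs => rw [hx]
      rw [map_sum]
      simp only [_root_.map_smul, smul_eq_mul]
      rw [dotProduct]
      exact Finset.sum_congr rfl fun j _ => by rw [mul_comm]
    have hd0 : d = 0 := by
      apply key
      intro i hi
      have hAis : A i ∈ Submodule.span ℝ s :=
        Submodule.subset_span ⟨i, hi, rfl⟩
      have : φ (A i) = 0 := by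
        have := hφ ▸ Submodule.mem_map_of_mem (f := φ) hAis
        simpa using this
      rw [hφx] at this
      rw [dotProduct_comm]
      exact this
    apply hφne
    apply LinearMap.ext
    intro x
    rw [hφx, hd0]
    simp
  obtain ⟨bs, hbsub, hbspan, hbli⟩ := exists_linearIndependent ℝ s
  rw [hspan] at hbspan
  have hbsle : ⊤ ≤ Submodule.span ℝ (Set.range ((↑) : bs → (Fin n → ℝ))) := by
    rw [Subtype.range_coe, hbspan]
  let B : Module.Basis bs ℝ (Fin n → ℝ) := Module.Basis.mk hbli hbsle
  have : Fintype bs := FiniteDimensional.fintypeBasisIndex B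
  have hcard : Fintype.card bs = n := by
    rw [← Module.finrank_eq_card_basis B, Module.finrank_fin_fun]
  let e : Fin n ≃ bs := (Fintype.equivFinOfCardEq hcard).symm
  have hchoice : ∀ w : bs, ∃ i : Fin m, A.mulVec v i = b i ∧ A i = (w : Fin n → ℝ) := by
    intro w
    obtain ⟨i, hi, hAi⟩ := hbsub w.2
    exact ⟨i, hi, hAi⟩
  choose ρ hρ1 hρ2 using hchoice
  have hρinj : Function.Injective ρ := by
    intro w w' h
    apply Subtype.ext
    rw [← hρ2 w, ← hρ2 w', h]
  refine ⟨⟨fun j => ρ (e j), hρinj.comp e.injective⟩, ?_, ?_, hvP⟩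
  · have hrows : LinearIndependent ℝ (fun j : Fin n => (A.submatrix (fun j => ρ (e j)) id) j) := by
      have heq : (fun j : Fin n => (A.submatrix (fun j => ρ (e j)) id) j)
          = fun j : Fin n => ((e j : Fin n → ℝ)) := by
        funext j
        exact hρ2 (e j)
      rw [heq]
      exact hbli.comp e e.injective
    have hU := Matrix.linearIndependent_rows_iff_isUnit.1 hrows
    rw [Matrix.isUnit_iff_isUnit_det] at hU
    exact isUnit_iff_ne_zero.1 hU
  · funext j
    exact hρ1 (e j)
end

section
/- Let I and I' be two distinct lex-feasible bases of the symbolically perturbed polyhedron associated with (A, b). Then the corresponding basic matrices X^I = A_I^{-1} b̃_I and X^{I'} = A_{I'}^{-1} b̃_{I'} are distinct. -/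
open Matrix

/-- Lexicographic order on row vectors in `ℝ^{1+m}`. -/
def lexLe {m : ℕ} (u v : Fin (m + 1) → ℝ) : Prop :=
  u = v ∨ ∃ k, (∀ j, j < k → u j = v j) ∧ u k < v k

/-- The perturbed right-hand side `b̃ = [b, -Id_m]`: row `i` encodes `b i - ε^(i+1)`. -/
def btilde {m : ℕ} (b : Fin m → ℝ) : Matrix (Fin m) (Fin (m + 1)) ℝ :=
  fun i j => if j = 0 then b i else if (j : ℕ) = (i : ℕ) + 1 then -1 else 0

/-- `I` (given by the embedding `r : Fin n ↪ Fin m`) is a lex-feasible basis with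
basic matrix `X`: `A_I` is nonsingular, `A_I X = b̃_I` (so `X = A_I⁻¹ b̃_I`) and
`A X ≥_lex b̃` row-wise. -/
def IsLexFeasibleBasis {m n : ℕ} (A : Matrix (Fin m) (Fin n) ℝ) (b : Fin m → ℝ)
    (r : Fin n ↪ Fin m) (X : Matrix (Fin n) (Fin (m + 1)) ℝ) : Prop :=
  (A.submatrix r id).det ≠ 0 ∧
  (A.submatrix r id) * X = (btilde b).submatrix r id ∧
  ∀ i, lexLe ((btilde b) i) ((A * X) i)

lemma key_aux {m n : ℕ} (A : Matrix (Fin m) (Fin n) ℝ) (b : Fin m → ℝ)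
    (r r' : Fin n ↪ Fin m) (X X' : Matrix (Fin n) (Fin (m + 1)) ℝ)
    (hI : IsLexFeasibleBasis A b r X) (hI' : IsLexFeasibleBasis A b r' X')
    (i : Fin m) (hi : i ∈ Set.range r) (hi' : i ∉ Set.range r') : X ≠ X' := by
  obtain ⟨k, hk⟩ := hi
  intro hXX
  subst hXX
  obtain ⟨hdet, heq, _⟩ := hI
  obtain ⟨hdet', heq', _⟩ := hI'
  have hne : ∀ l, r' l ≠ i := fun l h => hi' ⟨l, h⟩
  -- column i.succ of X is zero
  have hXcol : ∀ j, X j i.succ = 0 := by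
    have hinv : IsUnit (A.submatrix r' id).det := isUnit_iff_ne_zero.mpr hdet'
    have hX : X = (A.submatrix r' id)⁻¹ * ((btilde b).submatrix r' id) := by
      rw [← heq', ← Matrix.mul_assoc, Matrix.nonsing_inv_mul _ hinv, Matrix.one_mul]
    intro j
    rw [hX]
    rw [Matrix.mul_apply]
    apply Finset.sum_eq_zero
    intro l _
    have hb : btilde b (r' l) i.succ = 0 := by
      have h1 : (i.succ : ℕ) = (i : ℕ) + 1 := Fin.val_succ i
      have h2 : (i : ℕ) ≠ (r' l : ℕ) := fun h => hne l (Fin.ext h.symm)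
      have h3 : (i.succ : ℕ) ≠ (r' l : ℕ) + 1 := by
        rw [h1]; exact fun h => h2 (Nat.succ_injective h)
      simp [btilde, Fin.succ_ne_zero, h3]
      exact h2
    simp [Matrix.submatrix_apply, hb]
  -- row r k of A * X equals btilde row i
  have h1 : ∑ j, A i j * X j i.succ = btilde b i i.succ := by
    have := congrFun (congrFun heq k) i.succ
    simpa [Matrix.mul_apply, Matrix.submatrix_apply, hk] using this
  have h2 : btilde b i i.succ = -1 := by
    simp [btilde, Fin.succ_ne_zero, Fin.val_succ]
  have h3 : ∑ j, A i j * X j i.succ = 0 := by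
    apply Finset.sum_eq_zero; intro j _; simp [hXcol]
  rw [h3, h2] at h1
  norm_num at h1

/-- Two distinct lex-feasible bases have distinct basic matrices. -/
theorem stmt5 {m n : ℕ} (A : Matrix (Fin m) (Fin n) ℝ) (b : Fin m → ℝ)
    (r r' : Fin n ↪ Fin m) (X X' : Matrix (Fin n) (Fin (m + 1)) ℝ)
    (hI : IsLexFeasibleBasis A b r X) (hI' : IsLexFeasibleBasis A b r' X')
    (hne : Set.range r ≠ Set.range r') :
    X ≠ X' := by
  have : (¬ Set.range r ⊆ Set.range r') ∨ (¬ Set.range r' ⊆ Set.range r) := by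
    by_contra h
    push_neg at h
    exact hne (Set.Subset.antisymm h.1 h.2)
  rcases this with h | h
  · obtain ⟨i, hi, hi'⟩ := Set.not_subset.mp h
    exact key_aux A b r r' X X' hI hI' i hi hi'
  · obtain ⟨i, hi, hi'⟩ := Set.not_subset.mp h
    exact (key_aux A b r' r X' X hI' hI i hi hi').symm
end

section
/- For row vectors α = (α_0, …, α_m) and β = (β_0, …, β_m) in ℝ^{1+m}, α ≤_lex β holds if and only if there exists ε_0 > 0 such that for all ε with 0 < ε ≤ ε_0, ∑_{k=0}^m α_k ε^k ≤ ∑_{k=0}^m β_k ε^k. -/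
private lemma pos_of_first_pos {m : ℕ} (γ : Fin (m + 1) → ℝ) (k : Fin (m + 1))
    (h0 : ∀ j, j < k → γ j = 0) (hk : 0 < γ k) :
    ∃ ε₀ > (0 : ℝ), ∀ ε : ℝ, 0 < ε → ε ≤ ε₀ →
      0 < ∑ j : Fin (m + 1), γ j * ε ^ (j : ℕ) := by
  set M : ℝ := ∑ j : Fin (m + 1), |γ j| with hMdef
  have hM0 : 0 ≤ M := Finset.sum_nonneg fun j _ => abs_nonneg _
  refine ⟨min 1 (γ k / (2 * (M + 1))), by positivity, ?_⟩
  intro ε hε hεle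
  have hε1 : ε ≤ 1 := le_trans hεle (min_le_left _ _)
  have hε2 : ε ≤ γ k / (2 * (M + 1)) := le_trans hεle (min_le_right _ _)
  have hε2' : 2 * (M + 1) * ε ≤ γ k := by
    have h := (le_div_iff₀ (by positivity : (0:ℝ) < 2 * (M + 1))).mp hε2
    nlinarith
  have hsplit : ∑ j : Fin (m + 1), γ j * ε ^ (j : ℕ)
      = γ k * ε ^ (k : ℕ) + ∑ j ∈ Finset.univ.erase k, γ j * ε ^ (j : ℕ) :=
    (Finset.add_sum_erase _ _ (Finset.mem_univ k)).symm
  have hbound : ∀ j ∈ Finset.univ.erase k,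
      -(|γ j| * ε ^ ((k : ℕ) + 1)) ≤ γ j * ε ^ (j : ℕ) := by
    intro j hj
    have hjk : j ≠ k := Finset.ne_of_mem_erase hj
    rcases lt_or_gt_of_ne hjk with h | h
    · rw [h0 j h]
      have : 0 ≤ |γ j| * ε ^ ((k : ℕ) + 1) := by positivity
      simpa using by linarith
    · have hjk' : (k : ℕ) + 1 ≤ (j : ℕ) := h
      have h1 : ε ^ (j : ℕ) ≤ ε ^ ((k : ℕ) + 1) :=
        pow_le_pow_of_le_one (le_of_lt hε) hε1 hjk'
      have h2 : -(|γ j|) ≤ γ j := neg_abs_le _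
      have h3 : (0:ℝ) < ε ^ (j : ℕ) := pow_pos hε _
      nlinarith [abs_nonneg (γ j)]
  have hsum_bound : -(M * ε ^ ((k : ℕ) + 1)) ≤ ∑ j ∈ Finset.univ.erase k, γ j * ε ^ (j : ℕ) := by
    calc -(M * ε ^ ((k : ℕ) + 1))
        ≤ -((∑ j ∈ Finset.univ.erase k, |γ j|) * ε ^ ((k : ℕ) + 1)) := by
          have hsub : (∑ j ∈ Finset.univ.erase k, |γ j|) ≤ M := by
            apply Finset.sum_le_sum_of_subset_of_nonneg (Finset.erase_subset _ _)
            intro j _ _; exact abs_nonneg _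
          have : (0:ℝ) ≤ ε ^ ((k : ℕ) + 1) := by positivity
          nlinarith
      _ = ∑ j ∈ Finset.univ.erase k, -(|γ j| * ε ^ ((k : ℕ) + 1)) := by
          rw [Finset.sum_neg_distrib, Finset.sum_mul]
      _ ≤ _ := Finset.sum_le_sum hbound
  rw [hsplit]
  have hpk : (0:ℝ) < ε ^ (k : ℕ) := pow_pos hε _
  have hpk1 : ε ^ ((k : ℕ) + 1) = ε ^ (k : ℕ) * ε := pow_succ ε _
  nlinarith [hsum_bound]

/-- `α ≤_lex β` iff the polynomial `∑ α_k ε^k` is at most `∑ β_k ε^k` for all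
sufficiently small `ε > 0`. -/
theorem stmt8 {m : ℕ} (α β : Fin (m + 1) → ℝ) :
    lexLe α β ↔
      ∃ ε₀ > (0 : ℝ), ∀ ε : ℝ, 0 < ε → ε ≤ ε₀ →
        ∑ k : Fin (m + 1), α k * ε ^ (k : ℕ) ≤ ∑ k : Fin (m + 1), β k * ε ^ (k : ℕ) := by
  constructor
  · rintro (rfl | ⟨k, hpre, hlt⟩)
    · exact ⟨1, one_pos, fun ε _ _ => le_rfl⟩
    · obtain ⟨ε₀, hε₀, hpos⟩ := pos_of_first_pos (fun j => β j - α j) k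
        (fun j hj => by show β j - α j = 0; rw [hpre j hj]; ring)
        (by show (0:ℝ) < β k - α k; linarith)
      refine ⟨ε₀, hε₀, fun ε hε hεle => ?_⟩
      have := hpos ε hε hεle
      have hsum : ∑ j : Fin (m + 1), (β j - α j) * ε ^ (j : ℕ)
          = ∑ k : Fin (m + 1), β k * ε ^ (k : ℕ) - ∑ k : Fin (m + 1), α k * ε ^ (k : ℕ) := by
        rw [← Finset.sum_sub_distrib]; congr 1; ext j; ring
      linarith [hsum ▸ this]
  · intro ⟨ε₀, hε₀, hle⟩
    by_contra hnot
    have hne : α ≠ β := fun h => hnot (Or.inl h)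
    have hne' : ∃ j, α j ≠ β j := by
      by_contra h; push_neg at h; exact hne (funext h)
    set S : Finset (Fin (m + 1)) := Finset.univ.filter (fun j => α j ≠ β j) with hS
    have hSne : S.Nonempty := by
      obtain ⟨j, hj⟩ := hne'
      exact ⟨j, Finset.mem_filter.mpr ⟨Finset.mem_univ _, hj⟩⟩
    set k := S.min' hSne with hk
    have hkS : k ∈ S := S.min'_mem hSne
    have hkne : α k ≠ β k := (Finset.mem_filter.mp hkS).2
    have hpre : ∀ j, j < k → α j = β j := by
      intro j hj
      by_contra h
      have : j ∈ S := Finset.mem_filter.mpr ⟨Finset.mem_univ _, h⟩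
      exact absurd (S.min'_le j this) (not_le.mpr hj)
    have hgt : β k < α k := by
      rcases lt_or_gt_of_ne hkne with h | h
      · exact absurd (Or.inr ⟨k, hpre, h⟩) hnot
      · exact h
    obtain ⟨ε₁, hε₁, hpos⟩ := pos_of_first_pos (fun j => α j - β j) k
      (fun j hj => by show α j - β j = 0; rw [hpre j hj]; ring)
      (by show (0:ℝ) < α k - β k; linarith)
    set ε := min ε₀ ε₁ with hε
    have hεpos : 0 < ε := lt_min hε₀ hε₁
    have h1 := hle ε hεpos (min_le_left _ _)
    have h2 := hpos ε hεpos (min_le_right _ _)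
    have hsum : ∑ j : Fin (m + 1), (α j - β j) * ε ^ (j : ℕ)
        = ∑ k : Fin (m + 1), α k * ε ^ (k : ℕ) - ∑ k : Fin (m + 1), β k * ε ^ (k : ℕ) := by
      rw [← Finset.sum_sub_distrib]; congr 1; ext j; ring
    rw [hsum] at h2
    linarith
end

section
/- Let P = {x : A x ≥ b} be a polyhedron and v a vertex of P given as the basic point of the feasible basis I*. Then there exists a vector c ∈ ℝ^n such that v is the unique minimizer of x ↦ ⟨c, x⟩ over P. -/
open Matrix

/-- If `v` is the basic point of a feasible basis `I*` (given by the embedding `r`),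
then some linear functional `⟨c, ·⟩` is uniquely minimized over `P` at `v`. -/
theorem stmt10 {m n : ℕ} (A : Matrix (Fin m) (Fin n) ℝ) (b : Fin m → ℝ)
    (r : Fin n ↪ Fin m)  -- the feasible basis `I*`
    (hbasis : (A.submatrix r id).det ≠ 0)
    (v : Fin n → ℝ)
    (hv : (A.submatrix r id).mulVec v = fun i => b (r i))  -- `v = x^{I*}`
    (hfeas : v ∈ PolyhedronOf A b) :
    ∃ c : Fin n → ℝ, v ∈ PolyhedronOf A b ∧
      ∀ y ∈ PolyhedronOf A b, y ≠ v → c ⬝ᵥ v < c ⬝ᵥ y := by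
  refine ⟨fun j => ∑ i, A (r i) j, hfeas, ?_⟩
  intro y hy hne
  have key : ∀ x : Fin n → ℝ,
      (fun j => ∑ i, A (r i) j) ⬝ᵥ x = ∑ i, A.mulVec x (r i) := by
    intro x
    simp only [dotProduct, mulVec, Finset.sum_mul]
    rw [Finset.sum_comm]
  rw [key, key]
  have hsub : ∀ x : Fin n → ℝ, ∀ i, (A.submatrix r id).mulVec x i = A.mulVec x (r i) := by
    intro x i; simp [mulVec, dotProduct, submatrix]
  have hvb : ∀ i, A.mulVec v (r i) = b (r i) := by
    intro i; rw [← hsub]; exact congrFun hv i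
  have hle : ∀ i ∈ Finset.univ, A.mulVec v (r i) ≤ A.mulVec y (r i) := by
    intro i _; rw [hvb]; exact hy (r i)
  refine Finset.sum_lt_sum hle ?_
  by_contra hall
  push_neg at hall
  have heq : ∀ i, A.mulVec y (r i) = A.mulVec v (r i) := by
    intro i; exact le_antisymm (hall i (Finset.mem_univ i)) (hle i (Finset.mem_univ i))
  have hinj : Function.Injective (A.submatrix r id).mulVec :=
    mulVec_injective_iff_isUnit.2 ((isUnit_iff_isUnit_det _).2 (isUnit_iff_ne_zero.2 hbasis))
  apply hne
  apply hinj
  funext i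
  rw [hsub, hsub, heq]
end

section
/- Let P be a polytope with vertices v and w such that the segment [v,w] is an edge of P (a one-dimensional face cut out by an objective c), and let c' be such that w is the unique minimizer of ⟨c', ·⟩ over P. Then for all sufficiently small δ > 0, the vector d = c + δ c' satisfies ⟨d, w⟩ < ⟨d, v⟩ < ⟨d, z⟩ for every vertex z of P with z ∉ {v, w}. -/
open Matrix

lemma vertex_mem_and_min {n : ℕ} {P : Set (Fin n → ℝ)} {z : Fin n → ℝ}
    {c₀ : Fin n → ℝ} (h : {x ∈ P | ∀ y ∈ P, c₀ ⬝ᵥ x ≤ c₀ ⬝ᵥ y} = {z}) :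
    z ∈ P ∧ ∀ y ∈ P, c₀ ⬝ᵥ z ≤ c₀ ⬝ᵥ y := by
  have hz : z ∈ ({z} : Set (Fin n → ℝ)) := rfl
  rw [← h] at hz
  exact hz

lemma vertexSet_finite {m n : ℕ} (A : Matrix (Fin m) (Fin n) ℝ) (b : Fin m → ℝ) :
    {z | IsVertex (PolyhedronOf A b) z}.Finite := by
  classical
  apply Set.Finite.of_finite_image (f := fun z => {i | A.mulVec z i = b i})
  · exact Set.toFinite _
  · intro z hz z' hz' hact
    simp only [Set.mem_setOf_eq] at hz hz'
    obtain ⟨c₀, hc₀⟩ := hz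
    obtain ⟨hzP, hzmin⟩ := vertex_mem_and_min hc₀
    obtain ⟨c₁, hc₁⟩ := hz'
    obtain ⟨hz'P, _⟩ := vertex_mem_and_min hc₁
    have hactiff : ∀ i, A.mulVec z i = b i ↔ A.mulVec z' i = b i := by
      intro i
      exact Set.ext_iff.mp hact i
    set d := z' - z with hd
    have hAd : ∀ i, A.mulVec d i = A.mulVec z' i - A.mulVec z i := by
      intro i; rw [hd, Matrix.mulVec_sub]; rfl
    have key : ∀ i, A.mulVec d i ≠ 0 → b i < A.mulVec z i := by
      intro i h
      rcases lt_or_eq_of_le (hzP i) with h' | h'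
      · exact h'
      · exfalso
        apply h
        rw [hAd i, (hactiff i).mp h'.symm, ← h']
        ring
    set f : Fin m → ℝ := fun i =>
      if A.mulVec d i = 0 then 1 else (A.mulVec z i - b i) / |A.mulVec d i| with hf
    have hfpos : ∀ i, 0 < f i := by
      intro i
      rw [hf]
      by_cases h : A.mulVec d i = 0
      · simp [h]
      · simp only [h, if_false]
        exact div_pos (sub_pos.mpr (key i h)) (abs_pos.mpr h)
    set ε : ℝ := (insert (1:ℝ) (Finset.image f Finset.univ)).min'
      (Finset.insert_nonempty _ _) with hε
    have hεpos : 0 < ε := by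
      rw [hε, Finset.lt_min'_iff]
      intro y hy
      rcases Finset.mem_insert.mp hy with h | h
      · rw [h]; norm_num
      · obtain ⟨i, _, rfl⟩ := Finset.mem_image.mp h
        exact hfpos i
    have hεf : ∀ i, ε ≤ f i := by
      intro i
      exact Finset.min'_le _ _ (Finset.mem_insert_of_mem (Finset.mem_image_of_mem f (Finset.mem_univ i)))
    have hεbound : ∀ i, ε * |A.mulVec d i| ≤ A.mulVec z i - b i := by
      intro i
      by_cases h : A.mulVec d i = 0
      · simp [h]
        linarith [hzP i]
      · have h1 := hεf i
        rw [hf] at h1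
        simp only [h, if_false] at h1
        exact (le_div_iff₀ (abs_pos.mpr h)).mp h1
    have hmem : ∀ s : ℝ, |s| ≤ ε → z + s • d ∈ PolyhedronOf A b := by
      intro s hs i
      have h1 : A.mulVec (z + s • d) i = A.mulVec z i + s * A.mulVec d i := by
        rw [Matrix.mulVec_add, Matrix.mulVec_smul]; rfl
      have h2 : |s * A.mulVec d i| ≤ A.mulVec z i - b i := by
        rw [abs_mul]
        calc |s| * |A.mulVec d i| ≤ ε * |A.mulVec d i| := by
              apply mul_le_mul_of_nonneg_right hs (abs_nonneg _)
          _ ≤ _ := hεbound i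
      have h3 := abs_le.mp h2
      rw [h1]; linarith [h3.1]
    have hp : z + ε • d ∈ PolyhedronOf A b := hmem ε (by rw [abs_of_pos hεpos])
    have hm : z + (-ε) • d ∈ PolyhedronOf A b := hmem (-ε) (by rw [abs_neg, abs_of_pos hεpos])
    have h1 : c₀ ⬝ᵥ z ≤ c₀ ⬝ᵥ (z + ε • d) := hzmin _ hp
    have h2 : c₀ ⬝ᵥ z ≤ c₀ ⬝ᵥ (z + (-ε) • d) := hzmin _ hm
    have hsum : c₀ ⬝ᵥ (z + ε • d) + c₀ ⬝ᵥ (z + (-ε) • d) = 2 * (c₀ ⬝ᵥ z) := by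
      simp [dotProduct_add, dotProduct_smul, smul_eq_mul]
      ring
    have heq : c₀ ⬝ᵥ (z + ε • d) = c₀ ⬝ᵥ z := by linarith
    have hin : z + ε • d ∈ ({z} : Set (Fin n → ℝ)) := by
      rw [← hc₀]
      refine ⟨hp, fun y hy => ?_⟩
      rw [heq]; exact hzmin y hy
    have : ε • d = 0 := by
      have := Set.mem_singleton_iff.mp hin
      have h := congrArg (fun x => x - z) this
      simpa using h
    have hd0 : d = 0 := by
      rcases smul_eq_zero.mp this with h | h
      · exact absurd h (ne_of_gt hεpos)
      · exact h
    have : z' - z = 0 := hd0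
    exact (sub_eq_zero.mp this).symm

/-- Perturbing the objective cutting out an edge `[v, w]` by a small multiple of an
objective uniquely minimized at `w` makes `w` the best vertex and `v` the second
best. -/
theorem stmt11 {m n : ℕ} (A : Matrix (Fin m) (Fin n) ℝ) (b : Fin m → ℝ)
    (hbounded : ∃ R : ℝ, ∀ x ∈ PolyhedronOf A b, ∀ j, |x j| ≤ R)  -- `P` is a polytope
    (v w : Fin n → ℝ) (hvw : v ≠ w) (c c' : Fin n → ℝ)
    -- the segment `[v, w]` is the face of `P` cut out by the objective `c`:
    (hedge : {x ∈ PolyhedronOf A b | ∀ y ∈ PolyhedronOf A b, c ⬝ᵥ x ≤ c ⬝ᵥ y}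
      = segment ℝ v w)
    -- `w` is the unique minimizer of `⟨c', ·⟩` over `P`:
    (hw : {x ∈ PolyhedronOf A b | ∀ y ∈ PolyhedronOf A b, c' ⬝ᵥ x ≤ c' ⬝ᵥ y} = {w}) :
    ∃ δ₀ > (0 : ℝ), ∀ δ : ℝ, 0 < δ → δ ≤ δ₀ →
      (c + δ • c') ⬝ᵥ w < (c + δ • c') ⬝ᵥ v ∧
      ∀ z, IsVertex (PolyhedronOf A b) z → z ≠ v → z ≠ w →
        (c + δ • c') ⬝ᵥ v < (c + δ • c') ⬝ᵥ z := by
  classical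
  set P := PolyhedronOf A b with hP
  -- v, w are in the edge face
  have hvface : v ∈ {x ∈ P | ∀ y ∈ P, c ⬝ᵥ x ≤ c ⬝ᵥ y} := by
    rw [hedge]; exact left_mem_segment ℝ v w
  have hwface : w ∈ {x ∈ P | ∀ y ∈ P, c ⬝ᵥ x ≤ c ⬝ᵥ y} := by
    rw [hedge]; exact right_mem_segment ℝ v w
  obtain ⟨hvP, hvmin⟩ := hvface
  obtain ⟨hwP, hwmin⟩ := hwface
  have hcvw : c ⬝ᵥ v = c ⬝ᵥ w := le_antisymm (hvmin w hwP) (hwmin v hvP)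
  obtain ⟨hwP', hw'min⟩ := vertex_mem_and_min hw
  have hc'wv : c' ⬝ᵥ w < c' ⬝ᵥ v := by
    rcases lt_or_eq_of_le (hw'min v hvP) with h | h
    · exact h
    · exfalso
      apply hvw
      have : v ∈ ({w} : Set (Fin n → ℝ)) := by
        rw [← hw]
        exact ⟨hvP, fun y hy => h ▸ hw'min y hy⟩
      exact this
  -- key: each vertex other than v, w has strictly larger c-value
  have hkey : ∀ z, IsVertex P z → z ≠ v → z ≠ w → c ⬝ᵥ v < c ⬝ᵥ z := by
    intro z hz hzv hzw
    obtain ⟨c₀, hc₀⟩ := hz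
    obtain ⟨hzP, hzmin⟩ := vertex_mem_and_min hc₀
    by_contra hle
    push_neg at hle
    have hzface : z ∈ segment ℝ v w := by
      rw [← hedge]
      exact ⟨hzP, fun y hy => le_trans hle (hvmin y hy)⟩
    obtain ⟨a, b', ha, hb, hab, hzeq⟩ := hzface
    have ha0 : a ≠ 0 := by
      intro h
      apply hzw
      rw [← hzeq, h]
      simp only [zero_smul, zero_add]
      have : b' = 1 := by linarith
      rw [this, one_smul]
    have hb0 : b' ≠ 0 := by
      intro h
      apply hzv
      rw [← hzeq, h]
      simp only [zero_smul, add_zero]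
      have : a = 1 := by linarith
      rw [this, one_smul]
    have hapos : 0 < a := lt_of_le_of_ne ha (Ne.symm ha0)
    have hbpos : 0 < b' := lt_of_le_of_ne hb (Ne.symm hb0)
    have hz0 : c₀ ⬝ᵥ z = a * (c₀ ⬝ᵥ v) + b' * (c₀ ⬝ᵥ w) := by
      rw [← hzeq]
      simp [dotProduct_add, dotProduct_smul, smul_eq_mul]
    have h1 : c₀ ⬝ᵥ z ≤ c₀ ⬝ᵥ v := hzmin v hvP
    have h2 : c₀ ⬝ᵥ z ≤ c₀ ⬝ᵥ w := hzmin w hwP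
    have heqv : c₀ ⬝ᵥ v = c₀ ⬝ᵥ z := by
      by_contra hne
      have hlt : c₀ ⬝ᵥ z < c₀ ⬝ᵥ v := lt_of_le_of_ne h1 fun h => hne h.symm
      have hsum : a * (c₀ ⬝ᵥ z) + b' * (c₀ ⬝ᵥ z) = c₀ ⬝ᵥ z := by
        rw [← add_mul, hab, one_mul]
      linarith [mul_lt_mul_of_pos_left hlt hapos, mul_le_mul_of_nonneg_left h2 hb]
    apply hzv
    have : v ∈ ({z} : Set (Fin n → ℝ)) := by
      rw [← hc₀]
      exact ⟨hvP, fun y hy => heqv ▸ hzmin y hy⟩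
    exact (Set.mem_singleton_iff.mp this).symm
  -- finite vertex set, take min of gaps
  have hS : {z | IsVertex P z}.Finite := vertexSet_finite A b
  set T : Finset (Fin n → ℝ) := hS.toFinset.filter (fun z => z ≠ v ∧ z ≠ w) with hT
  set g : (Fin n → ℝ) → ℝ := fun z =>
    (c ⬝ᵥ z - c ⬝ᵥ v) / (2 * (|c' ⬝ᵥ v - c' ⬝ᵥ z| + 1)) with hg
  set δ₀ : ℝ := (insert (1:ℝ) (T.image g)).min' (Finset.insert_nonempty _ _) with hδ₀
  have hTmem : ∀ z ∈ T, IsVertex P z ∧ z ≠ v ∧ z ≠ w := by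
    intro z hz
    rw [hT, Finset.mem_filter] at hz
    exact ⟨hS.mem_toFinset.mp hz.1, hz.2⟩
  have hgpos : ∀ z ∈ T, 0 < g z := by
    intro z hz
    obtain ⟨h1, h2, h3⟩ := hTmem z hz
    apply div_pos (sub_pos.mpr (hkey z h1 h2 h3))
    positivity
  have hδ₀pos : 0 < δ₀ := by
    rw [hδ₀, Finset.lt_min'_iff]
    intro y hy
    rcases Finset.mem_insert.mp hy with h | h
    · rw [h]; norm_num
    · obtain ⟨i, hi, rfl⟩ := Finset.mem_image.mp h
      exact hgpos i hi
  refine ⟨δ₀, hδ₀pos, fun δ hδ hδ₀' => ⟨?_, ?_⟩⟩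
  · simp only [add_dotProduct, smul_dotProduct, smul_eq_mul]
    nlinarith
  · intro z hz hzv hzw
    have hzT : z ∈ T := by
      rw [hT, Finset.mem_filter]
      exact ⟨hS.mem_toFinset.mpr hz, hzv, hzw⟩
    have hE : 0 < c ⬝ᵥ z - c ⬝ᵥ v := sub_pos.mpr (hkey z hz hzv hzw)
    simp only [add_dotProduct, smul_dotProduct, smul_eq_mul]
    set D : ℝ := c' ⬝ᵥ v - c' ⬝ᵥ z with hD
    rcases le_or_gt D 0 with hDle | hDpos
    · nlinarith
    · have hδg : δ ≤ g z := le_trans hδ₀'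
        (Finset.min'_le _ _ (Finset.mem_insert_of_mem (Finset.mem_image_of_mem g hzT)))
      have habs : |D| = D := abs_of_pos hDpos
      have : δ * D ≤ g z * D := mul_le_mul_of_nonneg_right hδg (le_of_lt hDpos)
      have hgD : g z * D < c ⬝ᵥ z - c ⬝ᵥ v := by
        rw [hg]
        simp only
        rw [habs] at *
        rw [div_mul_eq_mul_div, div_lt_iff₀ (by positivity)]
        nlinarith
      nlinarith
end
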